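/- Let f = φ_{μ,σ} be the normal density with mean μ and variance σ², and t(x) = (x, x²). Then the bias factor f'' − f·g₂ vanishes identically, where g₂(x) = (0,2) Σ⁻¹ ((x−μ, x²−(σ²+μ²))ᵀ) and Σ is the covariance matrix of (X, X²) for X ~ N(μ, σ²). -/

import Mathlib

open Matrix Real

/-- The normal density with mean μ and standard deviation σ. -/
noncomputable def normalPdf (μ σ x : ℝ) : ℝ :=
  (Real.sqrt (2 * Real.pi * σ ^ 2))⁻¹ * Real.exp (-(x - μ) ^ 2 / (2 * σ ^ 2))

/-- The covariance matrix of (X, X²) for X ~ N(μ, σ²). -/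
noncomputable def covXX2 (μ σ : ℝ) : Matrix (Fin 2) (Fin 2) ℝ :=
  !![σ ^ 2, 2 * μ * σ ^ 2; 2 * μ * σ ^ 2, 4 * μ ^ 2 * σ ^ 2 + 2 * σ ^ 4]

lemma normalPdf_hasDerivAt (μ σ : ℝ) (hσ : σ ≠ 0) (x : ℝ) :
    HasDerivAt (normalPdf μ σ) (normalPdf μ σ x * (-(x - μ) / σ ^ 2)) x := by
  have h1 : HasDerivAt (fun x : ℝ => -(x - μ) ^ 2 / (2 * σ ^ 2))
      (-(x - μ) / σ ^ 2) x := by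
    have := (((hasDerivAt_id x).sub_const μ).pow 2).neg.div_const (2 * σ ^ 2)
    refine this.congr_deriv ?_
    simp only [id]
    field_simp
    ring
  have h2 := (h1.exp).const_mul ((Real.sqrt (2 * Real.pi * σ ^ 2))⁻¹)
  unfold normalPdf
  refine h2.congr_deriv ?_
  ring

lemma normalPdf_deriv (μ σ : ℝ) (hσ : σ ≠ 0) :
    deriv (normalPdf μ σ) = fun x => normalPdf μ σ x * (-(x - μ) / σ ^ 2) := by
  funext x
  exact (normalPdf_hasDerivAt μ σ hσ x).deriv

lemma normalPdf_deriv2 (μ σ : ℝ) (hσ : σ ≠ 0) (x : ℝ) :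
    deriv (deriv (normalPdf μ σ)) x
      = normalPdf μ σ x * (((x - μ) ^ 2 - σ ^ 2) / σ ^ 4) := by
  rw [normalPdf_deriv μ σ hσ]
  have h1 : HasDerivAt (fun x : ℝ => -(x - μ) / σ ^ 2) (-1 / σ ^ 2) x := by
    have := (((hasDerivAt_id x).sub_const μ).neg).div_const (σ ^ 2)
    exact this
  have h2 := (normalPdf_hasDerivAt μ σ hσ x).fun_mul h1
  rw [h2.deriv]
  have hs : σ ^ 2 ≠ 0 := pow_ne_zero 2 hσ
  field_simp
  ring

/-- for the normal density f = φ_{μ,σ} and t(x) = (x, x²), the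
bias factor f'' − f·g₂ vanishes identically, where
g₂(x) = (0,2) Σ⁻¹ (x−μ, x²−(σ²+μ²))ᵀ and Σ = Cov(X, X²). -/
theorem normal_bias_factor_vanishes (μ σ : ℝ) (hσ : 0 < σ) :
    ∀ x : ℝ,
      deriv (deriv (normalPdf μ σ)) x
        - normalPdf μ σ x *
            (2 * (((covXX2 μ σ)⁻¹ 1 0) * (x - μ)
              + ((covXX2 μ σ)⁻¹ 1 1) * (x ^ 2 - (σ ^ 2 + μ ^ 2)))) = 0 := by
  intro x
  have hσ' : σ ≠ 0 := hσ.ne'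
  have hdet : (covXX2 μ σ).det = 2 * σ ^ 6 := by
    simp [covXX2, Matrix.det_fin_two_of]
    ring
  have h10 : (covXX2 μ σ)⁻¹ 1 0 = -μ / σ ^ 4 := by
    rw [Matrix.inv_def, hdet]
    simp [covXX2, Matrix.adjugate_fin_two_of, Ring.inverse_eq_inv]
    field_simp
  have h11 : (covXX2 μ σ)⁻¹ 1 1 = 1 / (2 * σ ^ 4) := by
    rw [Matrix.inv_def, hdet]
    simp [covXX2, Matrix.adjugate_fin_two_of, Ring.inverse_eq_inv]
    field_simp
  rw [normalPdf_deriv2 μ σ hσ', h10, h11]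
  field_simp
  ring
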